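/- Let λ be a k-empty partition with e-weight w and e-core κ, and r a large integer with d = (r+k) mod e. Define n_{r,k}(λ) = |{(a,b) : a, b ∈ 𝔅_r(λ), a < b, a ≡ d (mod e), b ≢ d (mod e)}|. Then 𝔏_k(λ) + n_{r,k}(λ) = 𝔏_k(κ) + n_{r,k}(κ) + w. -/

import Mathlib

open scoped BigOperators

def IsPartition (f : ℕ → ℕ) : Prop :=
  (∀ ⦃i j : ℕ⦄, i ≤ j → f j ≤ f i) ∧ ∃ N : ℕ, ∀ i, N ≤ i → f i = 0

noncomputable def conj (f : ℕ → ℕ) (i : ℕ) : ℕ := Nat.card {j : ℕ // i + 1 ≤ f j}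

def betaSet (f : ℕ → ℕ) (r : ℕ) : Multiset ℕ :=
  (Multiset.range r).map fun i => f i + (r - 1 - i)

/-- e-extension of a multiset: z gets multiplicity |B ∩ {z, z+e, z+2e, …}|. -/
def eExt (e : ℕ) (B : Multiset ℕ) : Multiset ℕ :=
  B.bind fun b => (Multiset.range (b / e + 1)).map fun j => b - j * e

def runnerCount (e d : ℕ) (B : Multiset ℕ) : ℕ :=
  Multiset.card (B.filter fun b => b % e = d)

/-- Beta-multiset of the e-core: slide all beads up their runners. -/
def coreBeta (e : ℕ) (B : Multiset ℕ) : Multiset ℕ :=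
  (Multiset.range e).bind fun j =>
    (Multiset.range (runnerCount e j B)).map fun i => j + i * e

/-- Weight multiset 𝔚: records the start of each single-step slide; equivalently
determined by 𝔛 = 𝔛(core) ⊔ 𝔚. -/
def weightMS (e : ℕ) (B : Multiset ℕ) : Multiset ℕ :=
  eExt e B - eExt e (coreBeta e B)

def eWeight (e : ℕ) (B : Multiset ℕ) : ℕ := Multiset.card (weightMS e B)

def DomMS (I J : Multiset ℕ) : Prop := Multiset.Rel (fun a b => b ≤ a) I J

/-- refined dominance order: same e-core and 𝔛^e_r(g) ⪰ 𝔛^e_r(f). -/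
def Dominates (e r : ℕ) (g f : ℕ → ℕ) : Prop :=
  coreBeta e (betaSet g r) = coreBeta e (betaSet f r) ∧
    DomMS (eExt e (betaSet g r)) (eExt e (betaSet f r))
/-- k-empty: all beads on runner d = (r+k) mod e are as high as possible. -/
def KEmpty (e k r : ℕ) (f : ℕ → ℕ) : Prop :=
  ∀ b ∈ betaSet f r, b % e = (r + k) % e →
    b < (r + k) % e + runnerCount e ((r + k) % e) (betaSet f r) * e

/-- 𝔏_k(λ): number of elements (with multiplicity) of 𝔛^e_r(λ) greater than d + c·e. -/
def Lk (e k r : ℕ) (f : ℕ → ℕ) : ℕ :=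
  Multiset.card <| (eExt e (betaSet f r)).filter fun x =>
    (r + k) % e + runnerCount e ((r + k) % e) (betaSet f r) * e < x
/-- n_{r,k}(λ): number of pairs a < b in the beta-set with a ≡ d, b ≢ d (mod e). -/
def nrk (e d : ℕ) (B : Multiset ℕ) : ℕ :=
  ((B.filter fun a => a % e = d).map fun a =>
    Multiset.card (B.filter fun b => a < b ∧ ¬ b % e = d)).sum

def partOfBeta (C : Multiset ℕ) : ℕ → ℕ := fun i =>
  ((C.sort (· ≤ ·)).reverse.getD i 0) - (Multiset.card C - 1 - i)
namespace Stmt13Aux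
open Multiset

lemma sum_ite_card (p : ℕ → Prop) [DecidablePred p] (s : Multiset ℕ) :
    (s.map fun b => if p b then 1 else 0).sum = Multiset.card (s.filter p) := by
  induction s using Multiset.induction with
  | empty => simp
  | cons a s ih => by_cases h : p a <;> simp [h, ih, Multiset.filter_cons, Nat.add_comm]

lemma filter_bind (s : Multiset ℕ) (f : ℕ → Multiset ℕ) (p : ℕ → Prop) [DecidablePred p] :
    (s.bind f).filter p = s.bind fun a => (f a).filter p := by
  induction s using Multiset.induction with
  | empty => simp
  | cons a s ih => simp [Multiset.cons_bind, Multiset.filter_add, ih]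

lemma sum_swap' (s t : Multiset ℕ) (f : ℕ → ℕ → ℕ) :
    (s.map fun a => (t.map fun b => f a b).sum).sum
      = (t.map fun b => (s.map fun a => f a b).sum).sum := by
  induction s using Multiset.induction with
  | empty => simp
  | cons a s ih => simp [ih, Multiset.sum_map_add]

lemma bind_zero_of (s : Multiset ℕ) (f : ℕ → Multiset ℕ) (h : ∀ a ∈ s, f a = 0) :
    s.bind f = 0 := by
  induction s using Multiset.induction with
  | empty => simp
  | cons a s ih =>
    rw [Multiset.cons_bind, h a (Multiset.mem_cons_self a s),
      ih fun a ha => h a (Multiset.mem_cons_of_mem ha)]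
    simp

lemma bind_eq_single {s : Multiset ℕ} {f : ℕ → Multiset ℕ} {j : ℕ} (hs : s.Nodup) (hj : j ∈ s)
    (h0 : ∀ j' ∈ s, j' ≠ j → f j' = 0) : s.bind f = f j := by
  obtain ⟨t, rfl⟩ := Multiset.exists_cons_of_mem hj
  rw [Multiset.cons_bind, bind_zero_of t f fun a ha => h0 a (Multiset.mem_cons_of_mem ha)
    (fun h => (Multiset.nodup_cons.mp hs).1 (h ▸ ha))]
  simp

lemma card_eq_sum_runner {e : ℕ} (he : 0 < e) (M : Multiset ℕ) :
    Multiset.card M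
      = ((Multiset.range e).map fun j => Multiset.card (M.filter (· % e = j))).sum := by
  induction M using Multiset.induction with
  | empty => simp
  | cons b M ih =>
    have h1 : ∀ j : ℕ, Multiset.card ((b ::ₘ M).filter (· % e = j))
        = (if b % e = j then 1 else 0) + Multiset.card (M.filter (· % e = j)) := by
      intro j; by_cases h : b % e = j <;> simp [Multiset.filter_cons, h, Nat.add_comm]
    simp only [h1]
    rw [Multiset.sum_map_add, sum_ite_card]
    have h2 : (Multiset.range e).filter (fun j => b % e = j) = {b % e} := by
      rw [Multiset.filter_congr (fun x _ => by rw [eq_comm] : ∀ x ∈ Multiset.range e,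
        (b % e = x) ↔ (x = b % e)), Multiset.filter_eq']
      have : Multiset.count (b % e) (Multiset.range e) = 1 :=
        Multiset.count_eq_one_of_mem (Multiset.nodup_range e)
          (Multiset.mem_range.mpr (Nat.mod_lt b he))
      rw [this]; rfl
    rw [h2]
    simp [ih, Nat.add_comm]

/-! ### The column multiset `X e b` and the counting functions -/

def Xm (e b : ℕ) : Multiset ℕ := (Multiset.range (b / e + 1)).map fun j => b - j * e

lemma eExt_eq_bind (e : ℕ) (M : Multiset ℕ) : eExt e M = M.bind fun b => Xm e b := rfl

lemma card_Xm (e b : ℕ) : Multiset.card (Xm e b) = b / e + 1 := by simp [Xm]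

lemma mem_Xm {e b x : ℕ} (he : 0 < e) : x ∈ Xm e b ↔ x ≤ b ∧ x % e = b % e := by
  constructor
  · rintro hx
    obtain ⟨j, hj, rfl⟩ := Multiset.mem_map.mp hx
    have hj' : j ≤ b / e := Nat.lt_succ_iff.mp (Multiset.mem_range.mp hj)
    have hje : j * e ≤ b := (Nat.le_div_iff_mul_le he).mp hj'
    constructor
    · omega
    · rw [Nat.mul_comm] at hje ⊢
      exact Nat.sub_mul_mod hje
  · rintro ⟨hxb, hmod⟩
    refine Multiset.mem_map.mpr ⟨(b - x) / e, ?_, ?_⟩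
    · refine Multiset.mem_range.mpr (Nat.lt_succ_iff.mpr (Nat.div_le_div_right ?_))
      omega
    · have hdvd : e ∣ b - x := by
        exact (Nat.modEq_iff_dvd' hxb).mp hmod
      rw [Nat.div_mul_cancel hdvd]
      omega

lemma Xm_nodup {e b : ℕ} (he : 0 < e) : (Xm e b).Nodup := by
  refine Multiset.Nodup.map_on ?_ (Multiset.nodup_range _)
  intro x hx y hy hxy
  have hx' : x * e ≤ b := (Nat.le_div_iff_mul_le he).mp (Nat.lt_succ_iff.mp (Multiset.mem_range.mp hx))
  have hy' : y * e ≤ b := (Nat.le_div_iff_mul_le he).mp (Nat.lt_succ_iff.mp (Multiset.mem_range.mp hy))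
  have : x * e = y * e := by omega
  exact Nat.eq_of_mul_eq_mul_right he this

lemma count_Xm {e : ℕ} (he : 0 < e) (b x : ℕ) :
    Multiset.count x (Xm e b) = if x ≤ b ∧ x % e = b % e then 1 else 0 := by
  split_ifs with h
  · exact Multiset.count_eq_one_of_mem (Xm_nodup he) ((mem_Xm he).mpr h)
  · exact Multiset.count_eq_zero_of_notMem (fun hm => h ((mem_Xm he).mp hm))

lemma Xm_cons {e b : ℕ} (he : 0 < e) (hb : e ≤ b) : Xm e b = b ::ₘ Xm e (b - e) := by
  have hdiv : b / e = (b - e) / e + 1 := Nat.div_eq_sub_div he hb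
  rw [Xm, hdiv]
  have : Multiset.range ((b - e) / e + 1 + 1)
      = 0 ::ₘ (Multiset.range ((b - e) / e + 1)).map Nat.succ := by
    have := List.range_succ_eq_map (n := (b - e) / e + 1)
    exact congrArg _ this
  rw [this, Multiset.map_cons, Multiset.map_map]
  simp only [Nat.zero_mul, Nat.sub_zero]
  congr 1
  rw [Xm]
  refine Multiset.map_congr rfl ?_
  intro j _
  simp only [Function.comp]
  have h2 : Nat.succ j * e = e + j * e := by rw [Nat.succ_mul]; omega
  rw [h2, ← Nat.sub_sub]

def Ff (e T b : ℕ) : ℕ := Multiset.card ((Xm e b).filter fun x => ¬ T < x)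
def Gf (e T b : ℕ) : ℕ := Multiset.card ((Xm e b).filter fun x => T < x)
def gf (e d c b : ℕ) : ℕ :=
  Multiset.card (((Multiset.range c).map fun t => d + t * e).filter fun a => a < b)

lemma Gf_add_Ff (e T b : ℕ) : Gf e T b + Ff e T b = b / e + 1 := by
  rw [Gf, Ff, ← Multiset.card_add, Multiset.filter_add_not, card_Xm]

lemma Ff_step {e T b : ℕ} (he : 0 < e) (hb : e ≤ b) :
    Ff e T b = Ff e T (b - e) + (if b ≤ T then 1 else 0) := by
  rw [Ff, Ff, Xm_cons he hb, Multiset.filter_cons]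
  by_cases h : b ≤ T
  · rw [if_pos (by omega : ¬ T < b), if_pos h, Multiset.card_add, Multiset.card_singleton]
    omega
  · rw [if_neg (by omega : ¬ ¬ T < b), if_neg h]; simp

lemma Gf_step {e T b : ℕ} (he : 0 < e) (hb : e ≤ b) :
    Gf e T b = Gf e T (b - e) + (if T < b then 1 else 0) := by
  rw [Gf, Gf, Xm_cons he hb, Multiset.filter_cons]
  by_cases h : T < b
  · rw [if_pos h, if_pos h, Multiset.card_add, Multiset.card_singleton]; omega
  · rw [if_neg h, if_neg h]; simp

lemma gf_eq (e d c b : ℕ) :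
    gf e d c b = Multiset.card ((Multiset.range c).filter fun t => d + t * e < b) := by
  rw [gf, Multiset.filter_map, Multiset.card_map]; rfl

lemma card_filter_split (s : Multiset ℕ) (p q : ℕ → Prop) [DecidablePred p] [DecidablePred q] :
    Multiset.card (s.filter p)
      = Multiset.card (s.filter fun t => p t ∧ q t)
        + Multiset.card (s.filter fun t => p t ∧ ¬ q t) := by
  conv_lhs => rw [← Multiset.filter_add_not q (s.filter p)]
  rw [Multiset.filter_filter, Multiset.filter_filter, Multiset.card_add]
  congr 1 <;> exact congrArg _ (Multiset.filter_congr fun x _ => and_comm)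

lemma gf_step {e d c b : ℕ} (hd : d < e) (hb : e ≤ b) :
    gf e d c b = gf e d c (b - e) + (if b ≤ d + c * e then 1 else 0) := by
  have he : 0 < e := by omega
  rw [gf_eq, gf_eq]
  rw [card_filter_split (Multiset.range c) (fun t => d + t * e < b)
    (fun t => d + t * e < b - e)]
  congr 1
  · refine congrArg _ (Multiset.filter_congr ?_)
    intro t _
    constructor
    · exact fun h => h.2
    · exact fun h => ⟨by omega, h⟩
  · by_cases hT : b ≤ d + c * e
    · rw [if_pos hT]
      have hbd' : d < b := lt_of_lt_of_le hd hb
      obtain ⟨t0, h1, h2⟩ : ∃ t0, t0 * e ≤ b - d - 1 ∧ b - d - 1 < t0 * e + e := by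
        refine ⟨(b - d - 1) / e, ?_, ?_⟩
        · exact Nat.div_mul_le_self (b - d - 1) e
        · have hdm := Nat.div_add_mod (b - d - 1) e
          have hml := Nat.mod_lt (b - d - 1) he
          have hco : e * ((b - d - 1) / e) = (b - d - 1) / e * e :=
            Nat.mul_comm e ((b - d - 1) / e)
          omega
      have ht0c : t0 < c := by
        have : t0 * e < c * e := by omega
        exact Nat.lt_of_mul_lt_mul_right this
      have hmem : t0 ∈ (Multiset.range c).filter
          fun t => d + t * e < b ∧ ¬ d + t * e < b - e := by
        refine Multiset.mem_filter.mpr ⟨Multiset.mem_range.mpr ht0c, by omega, by omega⟩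
      have hsub : ((Multiset.range c).filter
          fun t => d + t * e < b ∧ ¬ d + t * e < b - e) ⊆ {t0} := by
        intro t ht
        obtain ⟨htr, hp, hq⟩ := Multiset.mem_filter.mp ht
        have hl : t * e < t0 * e + e := by omega
        have hl' : t < t0 + 1 := by
          have : t * e < (t0 + 1) * e := by rw [Nat.succ_mul]; omega
          exact Nat.lt_of_mul_lt_mul_right this
        have hg : t0 * e < t * e + e := by omega
        have hg' : t0 < t + 1 := by
          have : t0 * e < (t + 1) * e := by rw [Nat.succ_mul]; omega
          exact Nat.lt_of_mul_lt_mul_right this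
        have : t = t0 := by omega
        simp [this]
      have heq : ((Multiset.range c).filter
          fun t => d + t * e < b ∧ ¬ d + t * e < b - e) = {t0} :=
        le_antisymm
          ((Multiset.le_iff_subset (Multiset.Nodup.filter _ (Multiset.nodup_range c))).mpr hsub)
          (Multiset.singleton_le.mpr hmem)
      rw [heq, Multiset.card_singleton]
    · rw [if_neg hT]
      rw [Multiset.filter_eq_nil.mpr, Multiset.card_zero]
      intro t ht
      rintro ⟨hp, hq⟩
      have htc : t + 1 ≤ c := Multiset.mem_range.mp ht
      have : (t + 1) * e ≤ c * e := Nat.mul_le_mul_right e htc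
      rw [Nat.succ_mul] at this
      omega

lemma key_lemma {e d c : ℕ} (hd : d < e) :
    ∀ b, b % e ≠ d →
      gf e d c b + Ff e (d + c * e) (b % e)
        = gf e d c (b % e) + Ff e (d + c * e) b := by
  have he : 0 < e := by omega
  intro b
  induction b using Nat.strong_induction_on with
  | _ b ih =>
    intro hbd
    by_cases hb : b < e
    · rw [Nat.mod_eq_of_lt hb]
    · push_neg at hb
      have hmod : b % e = (b - e) % e := Nat.mod_eq_sub_mod hb
      have h1 := gf_step (c := c) (b := b) hd hb
      have h2 := Ff_step (T := d + c * e) (b := b) he hb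
      rw [hmod] at hbd ⊢
      have h3 := ih (b - e) (by omega) hbd
      by_cases hbt : b ≤ d + c * e
      · rw [if_pos hbt] at h1 h2; omega
      · rw [if_neg hbt] at h1 h2; omega

/-! ### Structure of runner filters and the core -/

lemma runner_filter_eq {e d : ℕ} {B : Multiset ℕ} (hd : d < e) (hB : B.Nodup)
    (hke : ∀ b ∈ B, b % e = d → b < d + runnerCount e d B * e) :
    B.filter (fun b => b % e = d)
      = (Multiset.range (runnerCount e d B)).map fun t => d + t * e := by
  have he : 0 < e := by omega
  have hsub : B.filter (fun b => b % e = d)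
      ⊆ (Multiset.range (runnerCount e d B)).map fun t => d + t * e := by
    intro b hb
    obtain ⟨hbB, hbd⟩ := Multiset.mem_filter.mp hb
    have hlt := hke b hbB hbd
    have h1 : e * (b / e) + b % e = b := Nat.div_add_mod b e
    have hco : e * (b / e) = b / e * e := Nat.mul_comm e (b / e)
    refine Multiset.mem_map.mpr ⟨b / e, Multiset.mem_range.mpr ?_, by omega⟩
    have : b / e * e < runnerCount e d B * e := by omega
    exact Nat.lt_of_mul_lt_mul_right this
  refine Multiset.eq_of_le_of_card_le
    ((Multiset.le_iff_subset (Multiset.Nodup.filter _ hB)).mpr hsub) ?_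
  rw [Multiset.card_map, Multiset.card_range, runnerCount]

lemma coreBeta_filter {e : ℕ} (he : 0 < e) (B : Multiset ℕ) {j : ℕ} (hj : j < e) :
    (coreBeta e B).filter (fun b => b % e = j)
      = (Multiset.range (runnerCount e j B)).map fun i => j + i * e := by
  rw [coreBeta, filter_bind]
  rw [bind_eq_single (Multiset.nodup_range e) (Multiset.mem_range.mpr hj) ?_]
  · rw [Multiset.filter_map]
    have h1 : Multiset.filter ((fun b => b % e = j) ∘ fun i => j + i * e)
        (Multiset.range (runnerCount e j B)) = Multiset.range (runnerCount e j B) := by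
      refine Multiset.filter_eq_self.mpr ?_
      intro i _
      show (j + i * e) % e = j
      rw [Nat.add_mul_mod_self_right, Nat.mod_eq_of_lt hj]
    rw [h1]
  · intro j' hj' hne
    rw [Multiset.filter_map]
    have h1 : Multiset.filter ((fun b => b % e = j) ∘ fun i => j' + i * e)
        (Multiset.range (runnerCount e j' B)) = 0 := by
      refine Multiset.filter_eq_nil.mpr ?_
      intro i _
      show ¬ (j' + i * e) % e = j
      rw [Nat.add_mul_mod_self_right, Nat.mod_eq_of_lt (Multiset.mem_range.mp hj')]
      exact hne
    rw [h1]
    rfl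

lemma runnerCount_coreBeta {e : ℕ} (he : 0 < e) (B : Multiset ℕ) {j : ℕ} (hj : j < e) :
    runnerCount e j (coreBeta e B) = runnerCount e j B := by
  rw [runnerCount, coreBeta_filter he B hj, Multiset.card_map, Multiset.card_range]

lemma coreBeta_nodup {e : ℕ} (he : 0 < e) (B : Multiset ℕ) : (coreBeta e B).Nodup := by
  rw [coreBeta, Multiset.nodup_bind]
  constructor
  · intro j _
    refine Multiset.Nodup.map_on ?_ (Multiset.nodup_range _)
    intro x _ y _ h
    have : x * e = y * e := by omega
    exact Nat.eq_of_mul_eq_mul_right he this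
  · refine ⟨List.range e, rfl, ?_⟩
    refine List.pairwise_iff_getElem.mpr ?_
    intro i j hi hj hij
    simp only [List.getElem_range] at *
    rw [List.length_range] at hi hj
    refine Multiset.disjoint_left.mpr ?_
    intro x hxi hxj
    obtain ⟨t, _, rfl⟩ := Multiset.mem_map.mp hxi
    obtain ⟨u, _, hu⟩ := Multiset.mem_map.mp hxj
    have h1 : (i + t * e) % e = i := by
      rw [Nat.add_mul_mod_self_right, Nat.mod_eq_of_lt hi]
    have h2 : (j + u * e) % e = j := by
      rw [Nat.add_mul_mod_self_right, Nat.mod_eq_of_lt hj]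
    rw [hu] at h2
    omega

lemma coreBeta_card {e : ℕ} (he : 0 < e) (B : Multiset ℕ) :
    Multiset.card (coreBeta e B) = Multiset.card B := by
  rw [coreBeta, Multiset.card_bind, card_eq_sum_runner he B]
  refine congrArg _ (Multiset.map_congr rfl ?_)
  intro j _
  simp [runnerCount]

lemma count_eExt {e : ℕ} (he : 0 < e) (M : Multiset ℕ) (x : ℕ) :
    Multiset.count x (eExt e M)
      = Multiset.card (M.filter fun b => x ≤ b ∧ x % e = b % e) := by
  rw [eExt_eq_bind, Multiset.count_bind, ← sum_ite_card]
  refine congrArg _ (Multiset.map_congr rfl ?_)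
  intro b _
  exact count_Xm he b x

lemma eExt_coreBeta_le {e : ℕ} (he : 0 < e) {B : Multiset ℕ} (hB : B.Nodup) :
    eExt e (coreBeta e B) ≤ eExt e B := by
  rw [Multiset.le_iff_count]
  intro x
  rw [count_eExt he, count_eExt he]
  have hje : x % e < e := Nat.mod_lt x he
  have hL : ∀ M : Multiset ℕ, M.filter (fun b => x ≤ b ∧ x % e = b % e)
      = (M.filter (fun b => b % e = x % e)).filter (fun b => x ≤ b) := by
    intro M
    rw [Multiset.filter_filter]
    refine Multiset.filter_congr (fun b _ => ?_)
    constructor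
    · rintro ⟨h1, h2⟩; exact ⟨h1, h2.symm⟩
    · rintro ⟨h1, h2⟩; exact ⟨h1, h2.symm⟩
  rw [hL, hL, coreBeta_filter he B hje]
  set n := runnerCount e (x % e) B with hn
  obtain ⟨m, hm⟩ : ∃ m, ∀ i : ℕ, (x % e + i * e < x ↔ i < m) := by
    by_cases hxj : x ≤ x % e
    · exact ⟨0, fun i => by constructor <;> omega⟩
    · refine ⟨(x - x % e - 1) / e + 1, fun i => ?_⟩
      have h1 : i ≤ (x - x % e - 1) / e ↔ i * e ≤ x - x % e - 1 :=
        Nat.le_div_iff_mul_le he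
      constructor
      · intro h
        have : i * e ≤ x - x % e - 1 := by omega
        have := h1.mpr this
        omega
      · intro h
        have : i ≤ (x - x % e - 1) / e := by omega
        have := h1.mp this
        omega
  have hAeq : ((Multiset.range n).map fun i => x % e + i * e).filter (fun b => x ≤ b)
      = Multiset.map (fun i => x % e + i * e) ((Multiset.range n).filter fun i => ¬ i < m) := by
    rw [Multiset.filter_map]
    refine congrArg _ (Multiset.filter_congr (fun i _ => ?_))
    show x ≤ x % e + i * e ↔ ¬ i < m
    rw [← hm i]; omega
  rw [hAeq, Multiset.card_map]
  -- counts
  have hsplitR : n = Multiset.card ((B.filter (fun b => b % e = x % e)).filter (fun b => x ≤ b))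
      + Multiset.card ((B.filter (fun b => b % e = x % e)).filter (fun b => ¬ x ≤ b)) := by
    rw [← Multiset.card_add, Multiset.filter_add_not]
    rfl
  have hsplitL : n = Multiset.card ((Multiset.range n).filter (fun i => i < m))
      + Multiset.card ((Multiset.range n).filter (fun i => ¬ i < m)) := by
    rw [← Multiset.card_add, Multiset.filter_add_not, Multiset.card_range]
  -- A' ≤ min n m where A' is the "below x" part of B's runner
  have hA'm : Multiset.card ((B.filter (fun b => b % e = x % e)).filter (fun b => ¬ x ≤ b)) ≤ m := by
    have hsub : (B.filter (fun b => b % e = x % e)).filter (fun b => ¬ x ≤ b)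
        ⊆ (Multiset.range m).map fun i => x % e + i * e := by
      intro b hb
      have hb1 := Multiset.mem_filter.mp hb
      have hb2 := Multiset.mem_filter.mp hb1.1
      have hbj : b % e = x % e := hb2.2
      have hbx : b < x := by omega
      have h1 : e * (b / e) + b % e = b := Nat.div_add_mod b e
      have hco : e * (b / e) = b / e * e := Nat.mul_comm e (b / e)
      refine Multiset.mem_map.mpr ⟨b / e, Multiset.mem_range.mpr ?_, by omega⟩
      rw [← hm (b / e)]
      omega
    have hle := (Multiset.le_iff_subset
      (Multiset.Nodup.filter _ (Multiset.Nodup.filter _ hB))).mpr hsub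
    have := Multiset.card_le_card hle
    rwa [Multiset.card_map, Multiset.card_range] at this
  have hA'n : Multiset.card ((B.filter (fun b => b % e = x % e)).filter (fun b => ¬ x ≤ b))
      ≤ n := by
    rw [hn, runnerCount]
    exact Multiset.card_le_card (Multiset.filter_le _ _)
  have hAm : min n m ≤ Multiset.card ((Multiset.range n).filter (fun i => i < m)) := by
    have hsub : Multiset.range (min n m) ⊆ (Multiset.range n).filter (fun i => i < m) := by
      intro i hi
      have := Multiset.mem_range.mp hi
      exact Multiset.mem_filter.mpr ⟨Multiset.mem_range.mpr (by omega), by omega⟩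
    have hle := (Multiset.le_iff_subset (Multiset.nodup_range _)).mpr hsub
    have := Multiset.card_le_card hle
    rwa [Multiset.card_range] at this
  omega

/-! ### Beta-set basics and the round trip through `partOfBeta` -/

lemma betaSet_card (f : ℕ → ℕ) (r : ℕ) : Multiset.card (betaSet f r) = r := by
  simp [betaSet]

lemma betaSet_nodup (f : ℕ → ℕ) (r : ℕ) (hmono : ∀ ⦃i j : ℕ⦄, i ≤ j → f j ≤ f i) :
    (betaSet f r).Nodup := by
  refine Multiset.Nodup.map_on ?_ (Multiset.nodup_range r)
  intro i hi j hj hij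
  have hi' := Multiset.mem_range.mp hi
  have hj' := Multiset.mem_range.mp hj
  by_contra hne
  rcases Nat.lt_or_ge i j with h | h
  · have := hmono (le_of_lt h); omega
  · have hji : j < i := by omega
    have := hmono (le_of_lt hji); omega

lemma betaSet_partOfBeta {C : Multiset ℕ} (hC : C.Nodup) :
    betaSet (partOfBeta C) (Multiset.card C) = C := by
  set l : List ℕ := (C.sort (· ≤ ·)).reverse with hl
  have hlen : l.length = Multiset.card C := by
    rw [hl, List.length_reverse, Multiset.length_sort]
  have hperm : (l : Multiset ℕ) = C := by
    rw [hl, Multiset.coe_reverse, Multiset.sort_eq]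
  have hpl : l.Pairwise (· > ·) := by
    rw [hl, List.pairwise_reverse]
    have hs : (C.sort (· ≤ ·)).Pairwise (· ≤ ·) := Multiset.pairwise_sort _ _
    have hnd : (C.sort (· ≤ ·)).Pairwise (· ≠ ·) := by
      have : ((C.sort (· ≤ ·) : List ℕ) : Multiset ℕ).Nodup := by
        rw [Multiset.sort_eq]; exact hC
      exact this
    exact (hs.and hnd).imp fun ⟨h1, h2⟩ => lt_of_le_of_ne h1 h2
  have hstrict : ∀ i j (hi : i < l.length) (hj : j < l.length), i < j → l[j] < l[i] :=
    fun i j hi hj hij => List.pairwise_iff_getElem.mp hpl i j hi hj hij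
  have hkey : ∀ t i (hi : i < l.length), l.length - 1 - i ≤ t → l.length - 1 - i ≤ l[i] := by
    intro t
    induction t with
    | zero => intro i hi h; omega
    | succ t ih =>
      intro i hi h
      by_cases h0 : l.length - 1 - i = 0
      · omega
      · have hi1 : i + 1 < l.length := by omega
        have := ih (i + 1) hi1 (by omega)
        have := hstrict i (i + 1) hi hi1 (by omega)
        omega
  have hkey' : ∀ i (hi : i < l.length), l.length - 1 - i ≤ l[i] :=
    fun i hi => hkey (l.length - 1 - i) i hi le_rfl
  rw [betaSet]
  have hmapeq : (Multiset.range (Multiset.card C)).map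
        (fun i => partOfBeta C i + (Multiset.card C - 1 - i))
      = (Multiset.range (Multiset.card C)).map (fun i => l.getD i 0) := by
    refine Multiset.map_congr rfl ?_
    intro i hi
    have hi' : i < l.length := by rw [hlen]; exact Multiset.mem_range.mp hi
    have hgd : partOfBeta C i = l.getD i 0 - (Multiset.card C - 1 - i) := rfl
    rw [hgd, List.getD_eq_getElem l 0 hi']
    have := hkey' i hi'
    rw [hlen] at this
    omega
  rw [hmapeq, ← hperm, Multiset.coe_card]
  show Multiset.map (fun i => l.getD i 0) ↑(List.range l.length) = (l : Multiset ℕ)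
  rw [Multiset.map_coe, Multiset.coe_eq_coe]
  refine List.Perm.of_eq ?_
  refine List.ext_getElem (by simp) ?_
  intro i h1 h2
  simp only [List.getElem_map, List.getElem_range]
  rw [List.getD_eq_getElem l 0 (by simpa using h2)]

/-! ### Sum formulas -/

lemma card_eExt (e : ℕ) (M : Multiset ℕ) :
    Multiset.card (eExt e M) = (M.map fun b => b / e + 1).sum := by
  rw [eExt_eq_bind, Multiset.card_bind]
  refine congrArg _ (Multiset.map_congr rfl fun b _ => ?_)
  exact card_Xm e b

lemma Lk_sum (e T : ℕ) (M : Multiset ℕ) :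
    Multiset.card ((eExt e M).filter fun x => T < x) = (M.map fun b => Gf e T b).sum := by
  rw [eExt_eq_bind, filter_bind, Multiset.card_bind]
  exact congrArg _ (Multiset.map_congr rfl fun b _ => rfl)

lemma sum_split (p : ℕ → Prop) [DecidablePred p] (M : Multiset ℕ) (h : ℕ → ℕ) :
    (M.map h).sum = ((M.filter p).map h).sum + ((M.filter fun a => ¬ p a).map h).sum := by
  conv_lhs => rw [← Multiset.filter_add_not p M]
  rw [Multiset.map_add, Multiset.sum_add]

lemma nrk_swap (e d : ℕ) (M : Multiset ℕ) :
    nrk e d M = ((M.filter fun b => ¬ b % e = d).map fun b =>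
      Multiset.card ((M.filter fun a => a % e = d).filter fun a => a < b)).sum := by
  rw [nrk]
  have step1 : ((M.filter fun a => a % e = d).map fun a =>
      Multiset.card (M.filter fun b => a < b ∧ ¬ b % e = d)).sum
      = ((M.filter fun a => a % e = d).map fun a =>
        ((M.filter fun b => ¬ b % e = d).map fun b => if a < b then 1 else 0).sum).sum := by
    refine congrArg _ (Multiset.map_congr rfl fun a _ => ?_)
    rw [sum_ite_card, Multiset.filter_filter]
  rw [step1, sum_swap']
  refine congrArg _ (Multiset.map_congr rfl fun b _ => ?_)
  rw [sum_ite_card]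

lemma residue_map_eq {e : ℕ} (he : 0 < e) (d : ℕ) (B : Multiset ℕ) :
    ((B.filter fun b => ¬ b % e = d).map fun b => b % e)
      = (((coreBeta e B).filter fun b => ¬ b % e = d).map fun b => b % e) := by
  ext j
  rw [Multiset.count_map, Multiset.count_map, Multiset.filter_filter, Multiset.filter_filter]
  by_cases hjd : j = d
  · rw [Multiset.filter_eq_nil.mpr, Multiset.filter_eq_nil.mpr]
    · rintro b _ ⟨h1, h2⟩; exact h2 (by omega)
    · rintro b _ ⟨h1, h2⟩; exact h2 (by omega)
  · by_cases hje : j < e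
    · have hpred : ∀ M : Multiset ℕ, M.filter (fun a => j = a % e ∧ ¬ a % e = d)
          = M.filter (fun b => b % e = j) := by
        intro M
        refine Multiset.filter_congr fun b _ => ?_
        constructor
        · rintro ⟨h1, h2⟩; omega
        · intro h; exact ⟨by omega, by omega⟩
      rw [hpred, hpred]
      exact (runnerCount_coreBeta he B hje).symm
    · rw [Multiset.filter_eq_nil.mpr, Multiset.filter_eq_nil.mpr]
      · rintro b _ ⟨h1, h2⟩
        have := Nat.mod_lt b he
        omega
      · rintro b _ ⟨h1, h2⟩
        have := Nat.mod_lt b he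
        omega

lemma sum_map_mod_eq {e : ℕ} (he : 0 < e) (d : ℕ) (B : Multiset ℕ) (F : ℕ → ℕ) :
    ((B.filter fun b => ¬ b % e = d).map fun b => F (b % e)).sum
      = (((coreBeta e B).filter fun b => ¬ b % e = d).map fun b => F (b % e)).sum := by
  have h := residue_map_eq he d B
  have h1 : (fun b => F (b % e)) = F ∘ (fun b : ℕ => b % e) := rfl
  rw [h1, ← Multiset.map_map, ← Multiset.map_map, h]

/-! ### The main combinatorial identity, multiset form -/

theorem main_general {e d : ℕ} (hd : d < e) {B : Multiset ℕ} (hB : B.Nodup)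
    (hke : ∀ b ∈ B, b % e = d → b < d + runnerCount e d B * e) :
    Multiset.card ((eExt e B).filter fun x => d + runnerCount e d B * e < x) + nrk e d B
      = Multiset.card ((eExt e (coreBeta e B)).filter
            fun x => d + runnerCount e d B * e < x)
        + nrk e d (coreBeta e B) + eWeight e B := by
  have he : 0 < e := by omega
  obtain ⟨c, hc⟩ : ∃ c, runnerCount e d B = c := ⟨_, rfl⟩
  rw [hc] at hke ⊢
  set T := d + c * e with hT
  have hBd : B.filter (fun b => b % e = d) = (Multiset.range c).map fun t => d + t * e := by
    have := runner_filter_eq hd hB (by rw [hc]; exact hke)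
    rwa [hc] at this
  have hCd : (coreBeta e B).filter (fun b => b % e = d)
      = (Multiset.range c).map fun t => d + t * e := by
    have := coreBeta_filter he B hd
    rwa [hc] at this
  have e1 : Multiset.card ((eExt e B).filter fun x => T < x)
      = (B.map fun b => Gf e T b).sum := Lk_sum e T B
  have e2 : Multiset.card ((eExt e (coreBeta e B)).filter fun x => T < x)
      = ((coreBeta e B).map fun b => Gf e T b).sum := Lk_sum e T (coreBeta e B)
  have e3 : nrk e d B
      = ((B.filter fun b => ¬ b % e = d).map fun b => gf e d c b).sum := by
    rw [nrk_swap, hBd]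
    exact congrArg _ (Multiset.map_congr rfl fun b _ => rfl)
  have e4 : nrk e d (coreBeta e B)
      = (((coreBeta e B).filter fun b => ¬ b % e = d).map fun b => gf e d c b).sum := by
    rw [nrk_swap, hCd]
    exact congrArg _ (Multiset.map_congr rfl fun b _ => rfl)
  have hle := eExt_coreBeta_le he hB
  have e5 : eWeight e B
      = Multiset.card (eExt e B) - Multiset.card (eExt e (coreBeta e B)) := by
    rw [eWeight, weightMS, Multiset.card_sub hle]
  have e10 : Multiset.card (eExt e (coreBeta e B)) ≤ Multiset.card (eExt e B) :=
    Multiset.card_le_card hle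
  have e6 : ∀ M : Multiset ℕ, Multiset.card (eExt e M)
      = (M.map fun b => Gf e T b).sum + (M.map fun b => Ff e T b).sum := by
    intro M
    rw [card_eExt, ← Multiset.sum_map_add]
    exact congrArg _ (Multiset.map_congr rfl fun b _ => (Gf_add_Ff e T b).symm)
  have e6B := e6 B
  have e6C := e6 (coreBeta e B)
  have e8 : ∀ M : Multiset ℕ, (M.map fun b => Ff e T b).sum
      = ((M.filter fun b => b % e = d).map fun b => Ff e T b).sum
        + ((M.filter fun b => ¬ b % e = d).map fun b => Ff e T b).sum :=
    fun M => sum_split _ M _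
  have e8B := e8 B
  have e8C := e8 (coreBeta e B)
  have e11 : ((B.filter fun b => b % e = d).map fun b => Ff e T b).sum
      = (((coreBeta e B).filter fun b => b % e = d).map fun b => Ff e T b).sum := by
    rw [hBd, hCd]
  have e12 : ∀ M : Multiset ℕ, (∀ b ∈ M, ¬ b % e = d) →
      ((M.map fun b => gf e d c b).sum + (M.map fun b => Ff e T (b % e)).sum
        = (M.map fun b => gf e d c (b % e)).sum + (M.map fun b => Ff e T b).sum) := by
    intro M hM
    rw [← Multiset.sum_map_add, ← Multiset.sum_map_add]
    exact congrArg _ (Multiset.map_congr rfl fun b hb => key_lemma hd b (hM b hb))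
  have e12B := e12 (B.filter fun b => ¬ b % e = d)
    (fun b hb => (Multiset.mem_filter.mp hb).2)
  have e12C := e12 ((coreBeta e B).filter fun b => ¬ b % e = d)
    (fun b hb => (Multiset.mem_filter.mp hb).2)
  have e14 : ((B.filter fun b => ¬ b % e = d).map fun b => Ff e T (b % e)).sum
      = (((coreBeta e B).filter fun b => ¬ b % e = d).map fun b => Ff e T (b % e)).sum :=
    sum_map_mod_eq he d B (fun j => Ff e T j)
  have e15 : ((B.filter fun b => ¬ b % e = d).map fun b => gf e d c (b % e)).sum
      = (((coreBeta e B).filter fun b => ¬ b % e = d).map fun b => gf e d c (b % e)).sum :=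
    sum_map_mod_eq he d B (fun j => gf e d c j)
  omega

end Stmt13Aux

/-- 𝔏_k(λ) + n_{r,k}(λ) = 𝔏_k(κ) + n_{r,k}(κ) + w. -/
theorem stmt13 (e k r : ℕ) (he : 2 ≤ e) (hk : k < e) (f : ℕ → ℕ)
    (hf : IsPartition f) (hr : conj f 0 ≤ r) (hke : KEmpty e k r f) :
    Lk e k r f + nrk e ((r + k) % e) (betaSet f r)
      = Lk e k r (partOfBeta (coreBeta e (betaSet f r)))
        + nrk e ((r + k) % e) (coreBeta e (betaSet f r))
        + eWeight e (betaSet f r) := by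
  have he0 : 0 < e := by omega
  have hd : (r + k) % e < e := Nat.mod_lt _ he0
  have hB : (betaSet f r).Nodup := Stmt13Aux.betaSet_nodup f r hf.1
  have hCr : betaSet (partOfBeta (coreBeta e (betaSet f r))) r = coreBeta e (betaSet f r) := by
    have h1 := Stmt13Aux.betaSet_partOfBeta (Stmt13Aux.coreBeta_nodup he0 (betaSet f r))
    rwa [Stmt13Aux.coreBeta_card he0 (betaSet f r), Stmt13Aux.betaSet_card f r] at h1
  simp only [Lk]
  rw [hCr, Stmt13Aux.runnerCount_coreBeta he0 (betaSet f r) hd]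
  exact Stmt13Aux.main_general hd hB hke
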